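/- Let A be a complex Banach algebra possessing a contractive approximate identity, and let H be a Hilbert A-module, with representation π_H : A → B(H), which is completely sub-tracing. Then the double commutant π_H(A)'' equals the closure of π_H(A) in the weak operator topology on B(H). -/

import Mathlib

noncomputable section

open Filter

open scoped ENNReal

/-- A contractive approximate identity for a (possibly non-unital) normed algebra `A`:
a net `(e i)`, indexed by a nontrivial filter, with `‖e i‖ ≤ 1` for all `i`, such that
`e i * a → a` and `a * e i → a` in norm for every `a ∈ A`. -/
def HasCAI (A : Type) [NonUnitalNormedRing A] : Prop :=
  ∃ (ι : Type) (l : Filter ι) (e : ι → A), l.NeBot ∧ (∀ i, ‖e i‖ ≤ 1) ∧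
    ∀ a : A, Tendsto (fun i => e i * a) l (nhds a) ∧ Tendsto (fun i => a * e i) l (nhds a)

variable (A : Type) [NonUnitalNormedRing A] [NormedSpace ℂ A] [IsScalarTower ℂ A A]
  [SMulCommClass ℂ A A]

/-- A Hilbert `A`-module structure on the Hilbert space `K`: a contractive algebra
homomorphism `π : A → B(K)` which is nondegenerate, i.e. the linear span of
`{π a x : a ∈ A, x ∈ K}` is dense in `K`. -/
def IsHilbertRep {K : Type} [NormedAddCommGroup K] [InnerProductSpace ℂ K] [CompleteSpace K]
    (π : A →ₙₐ[ℂ] (K →L[ℂ] K)) : Prop :=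
  (∀ a : A, ‖π a‖ ≤ ‖a‖) ∧
  Dense ((Submodule.span ℂ {x : K | ∃ (a : A) (y : K), π a y = x} : Submodule ℂ K) : Set K)

/-- A bounded `A`-module map between Hilbert `A`-modules. -/
def IsModuleMap {K L : Type} [NormedAddCommGroup K] [InnerProductSpace ℂ K]
    [NormedAddCommGroup L] [InnerProductSpace ℂ L]
    (πK : A →ₙₐ[ℂ] (K →L[ℂ] K)) (πL : A →ₙₐ[ℂ] (L →L[ℂ] L)) (T : K →L[ℂ] L) : Prop :=
  ∀ (a : A) (x : K), T (πK a x) = πL a (T x)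

/-- `H` is sub-tracing: for every closed `A`-invariant subspace `E` of `H` (a Hilbert
`A`-module under the restricted action), every Hilbert `A`-module `L`, and every nonzero
bounded `A`-module map `R : E → L`, there exists a bounded `A`-module map `V : H → E`
with `R ∘ V ≠ 0`. -/
def IsSubTracing {H : Type} [NormedAddCommGroup H] [InnerProductSpace ℂ H] [CompleteSpace H]
    (πH : A →ₙₐ[ℂ] (H →L[ℂ] H)) : Prop :=
  ∀ (E : Submodule ℂ H), IsClosed (E : Set H) →
    ∀ (hinv : ∀ (a : A), ∀ x ∈ E, πH a x ∈ E),
    ∀ (L : Type) [NormedAddCommGroup L] [InnerProductSpace ℂ L] [CompleteSpace L],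
    ∀ (πL : A →ₙₐ[ℂ] (L →L[ℂ] L)), IsHilbertRep A πL →
    ∀ R : ↥E →L[ℂ] L,
      (∀ (a : A) (x : ↥E), R ⟨πH a ↑x, hinv a ↑x x.2⟩ = πL a (R x)) → R ≠ 0 →
      ∃ V : H →L[ℂ] ↥E,
        (∀ (a : A) (x : H), (↑(V (πH a x)) : H) = πH a ↑(V x)) ∧ R.comp V ≠ 0

theorem diag_memℓp {H : Type} [NormedAddCommGroup H] [InnerProductSpace ℂ H] {ι : Type}
    (T : H →L[ℂ] H) (f : lp (fun _ : ι => H) 2) : Memℓp (fun i => T (f i)) 2 := by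
  apply memℓp_gen
  have hf : Summable fun i => ‖f i‖ ^ (2 : ℝ≥0∞).toReal :=
    (lp.memℓp f).summable (by norm_num)
  refine Summable.of_nonneg_of_le
    (fun i => Real.rpow_nonneg (norm_nonneg _) _) (fun i => ?_)
    (hf.mul_left (‖T‖ ^ (2 : ℝ≥0∞).toReal))
  calc ‖T (f i)‖ ^ (2 : ℝ≥0∞).toReal ≤ (‖T‖ * ‖f i‖) ^ (2 : ℝ≥0∞).toReal :=
        Real.rpow_le_rpow (norm_nonneg _) (T.le_opNorm _) (by norm_num)
    _ = _ := Real.mul_rpow (norm_nonneg _) (norm_nonneg _)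

/-- The diagonal amplification of an operator on `H` to the `ℓ²`-direct sum of `ι`
copies of `H`. -/
def lpDiag {H : Type} [NormedAddCommGroup H] [InnerProductSpace ℂ H] (ι : Type)
    (T : H →L[ℂ] H) : lp (fun _ : ι => H) 2 →L[ℂ] lp (fun _ : ι => H) 2 := by
  refine LinearMap.mkContinuous
    { toFun := fun f => ⟨fun i => T (f i), diag_memℓp T f⟩
      map_add' := ?_
      map_smul' := ?_ } ‖T‖ ?_
  · intro f g; ext i; simp; rfl
  · intro c f; ext i; simp
  · intro f
    apply lp.norm_le_of_tsum_le (by norm_num) (mul_nonneg (norm_nonneg T) (norm_nonneg f))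
    have hsum : Summable fun i => ‖T (f i)‖ ^ (2 : ℝ≥0∞).toReal :=
      (diag_memℓp T f).summable (by norm_num)
    have hf : Summable fun i => ‖f i‖ ^ (2 : ℝ≥0∞).toReal :=
      (lp.memℓp f).summable (by norm_num)
    have h1 : ∀ i, ‖T (f i)‖ ^ (2 : ℝ≥0∞).toReal ≤
        ‖T‖ ^ (2 : ℝ≥0∞).toReal * ‖f i‖ ^ (2 : ℝ≥0∞).toReal := fun i =>
      calc ‖T (f i)‖ ^ (2 : ℝ≥0∞).toReal ≤ (‖T‖ * ‖f i‖) ^ (2 : ℝ≥0∞).toReal :=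
            Real.rpow_le_rpow (norm_nonneg _) (T.le_opNorm _) (by norm_num)
        _ = _ := Real.mul_rpow (norm_nonneg _) (norm_nonneg _)
    calc (∑' i, ‖T (f i)‖ ^ (2 : ℝ≥0∞).toReal)
        ≤ ∑' i, ‖T‖ ^ (2 : ℝ≥0∞).toReal * ‖f i‖ ^ (2 : ℝ≥0∞).toReal :=
          Summable.tsum_le_tsum h1 hsum (hf.mul_left _)
      _ = ‖T‖ ^ (2 : ℝ≥0∞).toReal * ∑' i, ‖f i‖ ^ (2 : ℝ≥0∞).toReal := tsum_mul_left
      _ = ‖T‖ ^ (2 : ℝ≥0∞).toReal * ‖f‖ ^ (2 : ℝ≥0∞).toReal := by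
          rw [lp.norm_rpow_eq_tsum (by norm_num) f]
      _ = (‖T‖ * ‖f‖) ^ (2 : ℝ≥0∞).toReal :=
          (Real.mul_rpow (norm_nonneg _) (norm_nonneg _)).symm

/-- The multiple `H^(ι)` of a representation: the `ℓ²`-direct sum of `ι` copies of `H`,
with the coordinatewise action of `A`. -/
def multipleRep {H : Type} [NormedAddCommGroup H] [InnerProductSpace ℂ H]
    (πH : A →ₙₐ[ℂ] (H →L[ℂ] H)) (ι : Type) :
    A →ₙₐ[ℂ] (lp (fun _ : ι => H) 2 →L[ℂ] lp (fun _ : ι => H) 2) where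
  toFun a := lpDiag ι (πH a)
  map_add' a b := by ext f i; simp [lpDiag]; rfl
  map_smul' c a := by ext f i; simp [lpDiag]
  map_zero' := by ext f i; simp [lpDiag]
  map_mul' a b := by ext f i; simp [lpDiag, ContinuousLinearMap.mul_apply]

/-- The closure of a set of operators in the weak operator topology on `B(K)`. -/
def wotClosure {K : Type} [NormedAddCommGroup K] [InnerProductSpace ℂ K]
    (S : Set (K →L[ℂ] K)) : Set (K →L[ℂ] K) :=
  ContinuousLinearMapWOT.ofCLM ⁻¹' closure (ContinuousLinearMapWOT.ofCLM '' S)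

section Aux

variable {H : Type} [NormedAddCommGroup H] [InnerProductSpace ℂ H]

lemma lpDiag_apply {ι : Type} (T : H →L[ℂ] H) (f : lp (fun _ : ι => H) 2) (i : ι) :
    (lpDiag ι T f) i = T (f i) := rfl

lemma lpDiag_single (T : H →L[ℂ] H) (i : ℕ) (x : H) :
    lpDiag ℕ T (lp.single 2 i x) = lp.single 2 i (T x) := by
  ext j
  rcases eq_or_ne j i with rfl | h
  · simp [lpDiag_apply, lp.single_apply_self]
  · simp [lpDiag_apply, lp.single_apply_ne _ _ _ h, Pi.single_eq_of_ne h]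

lemma norm_lpDiag_le {ι : Type} (T : H →L[ℂ] H) : ‖lpDiag ι T‖ ≤ ‖T‖ := by
  rw [lpDiag]
  exact LinearMap.mkContinuous_norm_le _ (norm_nonneg T) _

/-- Coordinate evaluation as a continuous linear map. -/
def evalCLM (j : ℕ) : lp (fun _ : ℕ => H) 2 →L[ℂ] H :=
  LinearMap.mkContinuous
    { toFun := fun f => f j
      map_add' := fun f g => by simp
      map_smul' := fun c f => by simp }
    1 (fun f => by show ‖f j‖ ≤ 1 * ‖f‖; simpa using lp.norm_apply_le_norm (by norm_num) f j)

/-- Coordinate inclusion as a continuous linear map. -/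
def singleCLM (i : ℕ) : H →L[ℂ] lp (fun _ : ℕ => H) 2 :=
  LinearMap.mkContinuous
    { toFun := fun x => lp.single 2 i x
      map_add' := fun x y => by
        ext j
        rcases eq_or_ne j i with rfl | h
        · simp [lp.single_apply_self]
        · simp [lp.single_apply_ne _ _ _ h]
      map_smul' := fun c x => by
        ext j
        rcases eq_or_ne j i with rfl | h
        · simp [lp.single_apply_self]
        · simp [lp.single_apply_ne _ _ _ h] }
    1 (fun x => by
      simpa using le_of_eq (lp.norm_single (by norm_num) (fun _ : ℕ => x) i))

@[simp] lemma evalCLM_apply (j : ℕ) (f : lp (fun _ : ℕ => H) 2) : evalCLM j f = f j := rfl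

@[simp] lemma singleCLM_apply (i : ℕ) (x : H) : singleCLM i x = lp.single 2 i x := rfl

end Aux
section CAI

variable {A}

/-- The c.a.i. acts as an approximate identity on any vector in the closed essential
subspace of a contractive representation. -/
lemma cai_apply_tendsto {ι : Type} {l : Filter ι} [l.NeBot] {e : ι → A}
    (he1 : ∀ i, ‖e i‖ ≤ 1)
    (hca : ∀ a : A, Tendsto (fun i => e i * a) l (nhds a))
    {K : Type} [NormedAddCommGroup K] [NormedSpace ℂ K]
    (π : A →ₙₐ[ℂ] (K →L[ℂ] K)) (hπ : ∀ a, ‖π a‖ ≤ ‖a‖) (x : K)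
    (hx : x ∈ closure ((Submodule.span ℂ {z : K | ∃ (a : A) (y : K), π a y = z} :
      Submodule ℂ K) : Set K)) :
    Tendsto (fun i => π (e i) x) l (nhds x) := by
  have hspan : ∀ z ∈ (Submodule.span ℂ {z : K | ∃ (a : A) (y : K), π a y = z} :
      Submodule ℂ K), Tendsto (fun i => π (e i) z) l (nhds z) := by
    intro z hz
    induction hz using Submodule.span_induction with
    | mem z hz =>
      obtain ⟨a, y, rfl⟩ := hz
      have hφ : Continuous fun b : A => π b y := by
        have hb : ∀ b : A, ‖π b y‖ ≤ ‖y‖ * ‖b‖ := fun b =>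
          (((π b).le_opNorm y).trans
            (mul_le_mul_of_nonneg_right (hπ b) (norm_nonneg y))).trans_eq
            (mul_comm _ _)
        exact AddMonoidHomClass.continuous_of_bound
          ({ toFun := fun b : A => π b y
             map_add' := fun b c => by simp
             map_smul' := fun c b => by simp } : A →ₗ[ℂ] K) ‖y‖ hb
      have := (hφ.tendsto a).comp (hca a)
      simpa [Function.comp_def, map_mul, ContinuousLinearMap.mul_apply] using this
    | zero => simpa using (tendsto_const_nhds : Tendsto (fun _ : ι => (0 : K)) l _)
    | add z w hz hw hz' hw' => simpa using hz'.add hw'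
    | smul c z hz hz' => simpa using hz'.const_smul c
  rw [Metric.tendsto_nhds]
  intro ε hε
  obtain ⟨y, hy, hxy⟩ := Metric.mem_closure_iff.mp hx (ε / 3) (by linarith)
  filter_upwards [Metric.tendsto_nhds.mp (hspan y hy) (ε / 3) (by linarith)] with i hi
  have h1 : ‖π (e i) x - π (e i) y‖ ≤ ‖x - y‖ := by
    calc ‖π (e i) x - π (e i) y‖ = ‖π (e i) (x - y)‖ := by rw [map_sub]
      _ ≤ ‖π (e i)‖ * ‖x - y‖ := (π (e i)).le_opNorm _
      _ ≤ 1 * ‖x - y‖ :=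
        mul_le_mul_of_nonneg_right ((hπ (e i)).trans (he1 i)) (norm_nonneg _)
      _ = ‖x - y‖ := one_mul _
  have htri := dist_triangle4 (π (e i) x) (π (e i) y) y x
  simp only [dist_eq_norm] at htri hi hxy ⊢
  have h2 : ‖y - x‖ = ‖x - y‖ := norm_sub_rev _ _
  linarith [h1, hi, hxy, htri]

/-- The c.a.i. acts as an approximate identity on the whole `ℓ²`-multiple of a
nondegenerate contractive representation. -/
lemma cai_lp_tendsto {ι : Type} {l : Filter ι} [l.NeBot] {e : ι → A}
    (he1 : ∀ i, ‖e i‖ ≤ 1)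
    (hca : ∀ a : A, Tendsto (fun i => e i * a) l (nhds a))
    {H : Type} [NormedAddCommGroup H] [InnerProductSpace ℂ H] [CompleteSpace H]
    (πH : A →ₙₐ[ℂ] (H →L[ℂ] H)) (hrep : IsHilbertRep A πH)
    (f : lp (fun _ : ℕ => H) 2) :
    Tendsto (fun i => multipleRep A πH ℕ (e i) f) l (nhds f) := by
  have hnorm : ∀ b : A, ‖multipleRep A πH ℕ b‖ ≤ ‖b‖ := fun b =>
    (norm_lpDiag_le (πH b)).trans (hrep.1 b)
  rw [Metric.tendsto_nhds]
  intro ε hε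
  have hsum : HasSum (fun j : ℕ => lp.single 2 j (f j)) f :=
    lp.hasSum_single (by norm_num) f
  rw [HasSum, Metric.tendsto_nhds] at hsum
  obtain ⟨s, hs⟩ := (hsum (ε / 3) (by linarith)).exists
  set g : lp (fun _ : ℕ => H) 2 := ∑ j ∈ s, lp.single 2 j (f j) with hg
  have hgt : Tendsto (fun i => multipleRep A πH ℕ (e i) g) l (nhds g) := by
    have : ∀ i, multipleRep A πH ℕ (e i) g =
        ∑ j ∈ s, lp.single 2 j (πH (e i) (f j)) := by
      intro i
      rw [hg, map_sum]
      exact Finset.sum_congr rfl fun j _ => lpDiag_single (πH (e i)) j (f j)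
    rw [show g = ∑ j ∈ s, lp.single 2 j (f j) from hg]
    simp only [← hg, this]
    refine tendsto_finsetSum (M := lp (fun _ : ℕ => H) 2) _ (fun j _ => ?_)
    have hcj : Tendsto (fun i => πH (e i) (f j)) l (nhds (f j)) :=
      cai_apply_tendsto he1 hca πH hrep.1 (f j) (hrep.2 (f j))
    have := ((singleCLM j).continuous.tendsto (f j)).comp hcj
    simpa [Function.comp_def] using this
  filter_upwards [Metric.tendsto_nhds.mp hgt (ε / 3) (by linarith)] with i hi
  have h1 : ‖multipleRep A πH ℕ (e i) f - multipleRep A πH ℕ (e i) g‖ ≤ ‖f - g‖ := by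
    calc ‖multipleRep A πH ℕ (e i) f - multipleRep A πH ℕ (e i) g‖
        = ‖multipleRep A πH ℕ (e i) (f - g)‖ := by rw [map_sub]
      _ ≤ ‖multipleRep A πH ℕ (e i)‖ * ‖f - g‖ := ContinuousLinearMap.le_opNorm _ _
      _ ≤ 1 * ‖f - g‖ :=
        mul_le_mul_of_nonneg_right ((hnorm (e i)).trans (he1 i)) (norm_nonneg _)
      _ = ‖f - g‖ := one_mul _
  have htri := dist_triangle4 (multipleRep A πH ℕ (e i) f) (multipleRep A πH ℕ (e i) g) g f
  simp only [dist_eq_norm] at htri hi hs ⊢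
  have h2 : ‖f - g‖ = ‖g - f‖ := norm_sub_rev _ _
  linarith [h1, hi, hs, htri, h2]

end CAI
section Comm

variable {A}

/-- The diagonal amplification of an element of the double commutant commutes with every
bounded module map on the multiple. -/
lemma diag_comm {H : Type} [NormedAddCommGroup H] [InnerProductSpace ℂ H]
    (πH : A →ₙₐ[ℂ] (H →L[ℂ] H)) (T : H →L[ℂ] H)
    (hT : T ∈ Set.centralizer (Set.centralizer (Set.range ⇑πH)))
    (W : lp (fun _ : ℕ => H) 2 →L[ℂ] lp (fun _ : ℕ => H) 2)
    (hW : ∀ (a : A) (x : lp (fun _ : ℕ => H) 2),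
      W (multipleRep A πH ℕ a x) = multipleRep A πH ℕ a (W x))
    (x : lp (fun _ : ℕ => H) 2) :
    lpDiag ℕ T (W x) = W (lpDiag ℕ T x) := by
  ext j
  have hx : HasSum (fun i : ℕ => lp.single 2 i (x i)) x :=
    lp.hasSum_single (by norm_num) x
  have hWij : ∀ i : ℕ,
      ((evalCLM j).comp (W.comp (singleCLM i))) ∈ Set.centralizer (Set.range ⇑πH) := by
    intro i
    rw [Set.mem_centralizer_iff]
    rintro m ⟨a, rfl⟩
    ext z
    show πH a (((evalCLM j).comp (W.comp (singleCLM i))) z)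
      = ((evalCLM j).comp (W.comp (singleCLM i))) (πH a z)
    have h1 : (singleCLM (H := H) i) (πH a z) = multipleRep A πH ℕ a (singleCLM i z) := by
      simp only [singleCLM_apply]
      exact (lpDiag_single (πH a) i z).symm
    simp only [ContinuousLinearMap.comp_apply, h1, hW, evalCLM_apply]
    rfl
  have hcomm : ∀ (i : ℕ) (v : H),
      T ((W (lp.single 2 i v)) j) = (W (lp.single 2 i (T v))) j := by
    intro i v
    have := hT _ (hWij i)
    have h2 := congrArg (fun (S : H →L[ℂ] H) => S v) this
    simpa [ContinuousLinearMap.mul_apply] using h2.symm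
  have h1 : HasSum (fun i : ℕ => T ((W (lp.single 2 i (x i))) j)) (T ((W x) j)) :=
    (T.comp ((evalCLM j).comp W)).hasSum hx
  have h2 : HasSum (fun i : ℕ => (W (lp.single 2 i (T (x i)))) j)
      ((W (lpDiag ℕ T x)) j) := by
    have := ((evalCLM (H := H) j).comp W).hasSum ((lpDiag ℕ T).hasSum hx)
    simpa [lpDiag_single] using this
  rw [show (fun i : ℕ => (W (lp.single 2 i (T (x i)))) j)
      = (fun i : ℕ => T ((W (lp.single 2 i (x i))) j)) from
    funext fun i => (hcomm i (x i)).symm] at h2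
  show T ((W x) j) = (W (lpDiag ℕ T x)) j
  exact h1.unique h2

end Comm
section Compress

variable {A}

/-- Compression of a representation to a co-invariant subspace, given multiplicativity. -/
def compressRep {K : Type} [NormedAddCommGroup K] [InnerProductSpace ℂ K]
    (π : A →ₙₐ[ℂ] (K →L[ℂ] K)) (L : Submodule ℂ K) [L.HasOrthogonalProjection]
    (hmul : ∀ a b : A,
      (L.orthogonalProjectionOnto).comp ((π (a * b)).comp L.subtypeL) =
        ((L.orthogonalProjectionOnto).comp ((π a).comp L.subtypeL)) *
          ((L.orthogonalProjectionOnto).comp ((π b).comp L.subtypeL))) :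
    A →ₙₐ[ℂ] (↥L →L[ℂ] ↥L) where
  toFun a := (L.orthogonalProjectionOnto).comp ((π a).comp L.subtypeL)
  map_smul' c a := by
    rw [map_smul, ContinuousLinearMap.smul_comp, ContinuousLinearMap.comp_smul]
    rfl
  map_zero' := by
    rw [map_zero, ContinuousLinearMap.zero_comp, ContinuousLinearMap.comp_zero]
  map_add' a b := by
    rw [map_add, ContinuousLinearMap.add_comp, ContinuousLinearMap.comp_add]
  map_mul' := hmul

@[simp] lemma compressRep_apply {K : Type} [NormedAddCommGroup K] [InnerProductSpace ℂ K]
    (π : A →ₙₐ[ℂ] (K →L[ℂ] K)) (L : Submodule ℂ K) [L.HasOrthogonalProjection]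
    (hmul : ∀ a b : A,
      (L.orthogonalProjectionOnto).comp ((π (a * b)).comp L.subtypeL) =
        ((L.orthogonalProjectionOnto).comp ((π a).comp L.subtypeL)) *
          ((L.orthogonalProjectionOnto).comp ((π b).comp L.subtypeL)))
    (a : A) (z : ↥L) :
    compressRep π L hmul a z = L.orthogonalProjectionOnto (π a ↑z) := rfl

lemma compressRep_norm_le {K : Type} [NormedAddCommGroup K] [InnerProductSpace ℂ K]
    (π : A →ₙₐ[ℂ] (K →L[ℂ] K)) (L : Submodule ℂ K) [L.HasOrthogonalProjection]
    (hmul : ∀ a b : A,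
      (L.orthogonalProjectionOnto).comp ((π (a * b)).comp L.subtypeL) =
        ((L.orthogonalProjectionOnto).comp ((π a).comp L.subtypeL)) *
          ((L.orthogonalProjectionOnto).comp ((π b).comp L.subtypeL)))
    (hπ : ∀ a : A, ‖π a‖ ≤ ‖a‖) (a : A) : ‖compressRep π L hmul a‖ ≤ ‖a‖ := by
  refine ContinuousLinearMap.opNorm_le_bound _ (norm_nonneg a) (fun z => ?_)
  calc ‖compressRep π L hmul a z‖
      ≤ ‖L.orthogonalProjectionOnto‖ * ‖π a (↑z : K)‖ :=
        (L.orthogonalProjectionOnto).le_opNorm _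
    _ ≤ 1 * (‖π a‖ * ‖(↑z : K)‖) :=
        mul_le_mul (Submodule.orthogonalProjectionOnto_norm_le L) ((π a).le_opNorm _)
          (norm_nonneg _) zero_le_one
    _ = ‖π a‖ * ‖z‖ := by rw [one_mul]; rfl
    _ ≤ ‖a‖ * ‖z‖ := mul_le_mul_of_nonneg_right (hπ a) (norm_nonneg _)

end Compress
section Core

variable {A}

set_option maxHeartbeats 1000000

/-- Core lemma: if `H` is completely sub-tracing, then the diagonal amplification of any
element of the double commutant leaves every closed invariant subspace of the countable
multiple invariant. -/
lemma diag_mapsTo {H : Type} [NormedAddCommGroup H] [InnerProductSpace ℂ H]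
    [CompleteSpace H]
    {ι : Type} {l : Filter ι} [l.NeBot] {e : ι → A}
    (he1 : ∀ i, ‖e i‖ ≤ 1)
    (hca : ∀ a : A, Tendsto (fun i => e i * a) l (nhds a))
    (πH : A →ₙₐ[ℂ] (H →L[ℂ] H)) (hrep : IsHilbertRep A πH)
    (hsub : IsSubTracing A (multipleRep A πH ℕ))
    (T : H →L[ℂ] H) (hT : T ∈ Set.centralizer (Set.centralizer (Set.range ⇑πH)))
    (E : Submodule ℂ (lp (fun _ : ℕ => H) 2))
    (hEc : IsClosed (E : Set (lp (fun _ : ℕ => H) 2)))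
    (hEinv : ∀ a : A, ∀ x ∈ E, multipleRep A πH ℕ a x ∈ E) :
    ∀ x ∈ E, lpDiag ℕ T x ∈ E := by
  classical
  set K := lp (fun _ : ℕ => H) 2 with hK
  set π2 := multipleRep A πH ℕ with hπ2
  -- the set of all vectors reachable by bounded module maps into `E`
  set U : Set K := {x : K | ∃ V : K →L[ℂ] ↥E,
    (∀ (a : A) (ζ : K), (↑(V (π2 a ζ)) : K) = π2 a ↑(V ζ)) ∧ ∃ ζ : K, (↑(V ζ) : K) = x}
    with hU
  set D : Submodule ℂ K := (Submodule.span ℂ U).topologicalClosure with hD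
  have hUE : U ⊆ (E : Set K) := by
    rintro x ⟨V, hV, ζ, rfl⟩
    exact (V ζ).2
  have hDE : D ≤ E :=
    Submodule.topologicalClosure_minimal _ (Submodule.span_le.mpr hUE) hEc
  have hDc : IsClosed (D : Set K) := Submodule.isClosed_topologicalClosure _
  haveI : CompleteSpace ↥D := hDc.completeSpace_coe
  haveI : CompleteSpace ↥E := hEc.completeSpace_coe
  -- invariance of D
  have hUinv : ∀ a : A, ∀ x ∈ U, π2 a x ∈ U := by
    rintro a x ⟨V, hV, ζ, rfl⟩
    exact ⟨V, hV, π2 a ζ, (hV a ζ).trans rfl⟩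
  have hspanInv : ∀ a : A, ∀ x ∈ Submodule.span ℂ U, π2 a x ∈ Submodule.span ℂ U := by
    intro a x hx
    induction hx using Submodule.span_induction with
    | mem z hz => exact Submodule.subset_span (hUinv a z hz)
    | zero => simpa using Submodule.zero_mem _
    | add z w _ _ hz hw => simpa [map_add] using Submodule.add_mem _ hz hw
    | smul c z _ hz => simpa [map_smul] using Submodule.smul_mem _ c hz
  have hDinv : ∀ a : A, ∀ x ∈ D, π2 a x ∈ D := by
    intro a x hx
    have hx' : x ∈ closure ((Submodule.span ℂ U : Submodule ℂ K) : Set K) := hx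
    have := map_mem_closure (π2 a).continuous hx' (fun z hz => hspanInv a z hz)
    exact this
  -- the amplified T maps D into E
  have hTD : ∀ x ∈ D, lpDiag ℕ T x ∈ E := by
    have hTspan : ∀ x ∈ Submodule.span ℂ U, lpDiag ℕ T x ∈ E := by
      intro x hx
      induction hx using Submodule.span_induction with
      | mem z hz =>
        obtain ⟨V, hV, ζ, rfl⟩ := hz
        have hW : ∀ (a : A) (x : K),
            (E.subtypeL.comp V) (π2 a x) = π2 a ((E.subtypeL.comp V) x) := by
          intro a x
          simpa using hV a x
        have := diag_comm πH T hT (E.subtypeL.comp V) hW ζ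
        have h2 : lpDiag ℕ T ((E.subtypeL.comp V) ζ) = ↑(V (lpDiag ℕ T ζ)) := by
          rw [this]; rfl
        simpa using h2 ▸ (V (lpDiag ℕ T ζ)).2
      | zero => simpa using E.zero_mem
      | add z w _ _ hz hw => simpa [map_add] using E.add_mem hz hw
      | smul c z _ hz => simpa [map_smul] using E.smul_mem c hz
    intro x hx
    have hx' : x ∈ closure ((Submodule.span ℂ U : Submodule ℂ K) : Set K) := hx
    have := map_mem_closure (lpDiag ℕ T).continuous hx' (fun z hz => hTspan z hz)
    rwa [hEc.closure_eq] at this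
  -- main claim: E ≤ D
  have hED : E ≤ D := by
    by_contra hne
    obtain ⟨x0, hx0E, hx0D⟩ := SetLike.not_le_iff_exists.mp hne
    set L : Submodule ℂ K := Dᗮ ⊓ E with hL
    have hLc : IsClosed (L : Set K) := by
      rw [hL, Submodule.coe_inf]
      exact (Submodule.isClosed_orthogonal D).inter hEc
    haveI : CompleteSpace ↥L := hLc.completeSpace_coe
    set P : K →L[ℂ] ↥L := L.orthogonalProjectionOnto with hP
    have hDperp : D ≤ Lᗮ := by
      intro d hd
      rw [Submodule.mem_orthogonal]
      intro u hu
      exact (Submodule.mem_orthogonal' D u).mp hu.1 d hd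
    have hPD : ∀ z ∈ D, P z = 0 := fun z hz =>
      Submodule.orthogonalProjectionOnto_apply_of_mem_orthogonal (hDperp hz)
    have hdec : ∀ x ∈ E, x - ↑(P x) ∈ D ∧ (↑(P x) : K) = x - ↑(D.orthogonalProjectionOnto x) := by
      intro x hx
      set d : K := ↑(D.orthogonalProjectionOnto x) with hd
      have hdD : d ∈ D := (D.orthogonalProjectionOnto x).2
      have hxd : x - d ∈ Dᗮ := Submodule.sub_starProjection_mem_orthogonal x
      have hwL : x - d ∈ L := ⟨hxd, E.sub_mem hx (hDE hdD)⟩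
      have hPx : P x = ⟨x - d, hwL⟩ := by
        have hsplit : x = d + (x - d) := by abel
        rw [show P x = P (d + (x - d)) from by rw [← hsplit], map_add,
          hPD d hdD, Submodule.orthogonalProjectionOnto_mem_subspace_eq_self ⟨x - d, hwL⟩]
        simp
      constructor
      · rw [hPx]
        simpa using hdD
      · rw [hPx]
    -- compression of the action to L
    have hkey : ∀ (a : A) (w : K), w ∈ E → P (π2 a w) = P (π2 a ↑(P w)) := by
      intro a w hw
      have h1 : π2 a w - π2 a ↑(P w) = π2 a (w - ↑(P w)) := (map_sub _ _ _).symm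
      have h2 : P (π2 a w) - P (π2 a ↑(P w)) = P (π2 a (w - ↑(P w))) := by
        rw [← map_sub, h1]
      have h3 : π2 a (w - ↑(P w)) ∈ D := hDinv a _ (hdec w hw).1
      have := hPD _ h3
      rw [← h2] at this
      exact sub_eq_zero.mp this
    have hmul : ∀ a b : A,
        (L.orthogonalProjectionOnto).comp ((π2 (a * b)).comp L.subtypeL) =
          ((L.orthogonalProjectionOnto).comp ((π2 a).comp L.subtypeL)) *
            ((L.orthogonalProjectionOnto).comp ((π2 b).comp L.subtypeL)) := by
      intro a b
      refine ContinuousLinearMap.ext fun z => ?_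
      have hz : (↑z : K) ∈ E := (Submodule.mem_inf.mp z.2).2
      have hw : (π2 b) (↑z : K) ∈ E := hEinv b _ hz
      have hk := hkey a _ hw
      show P ((π2 (a * b)) (↑z : K)) = P ((π2 a) ↑(P ((π2 b) (↑z : K))))
      rw [map_mul, ContinuousLinearMap.mul_apply]
      exact hk
    set πL := compressRep π2 L hmul with hπL
    have hπLnorm : ∀ a : A, ‖πL a‖ ≤ ‖a‖ := fun a =>
      compressRep_norm_le π2 L hmul
        (fun b => (norm_lpDiag_le (πH b)).trans (hrep.1 b)) a
    have hLtend : ∀ z : ↥L, Tendsto (fun i => πL (e i) z) l (nhds z) := by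
      intro z
      have h1 : Tendsto (fun i => (π2 (e i)) (↑z : K)) l (nhds ↑z) :=
        cai_lp_tendsto he1 hca πH hrep (↑z : K)
      have h2 := ((L.orthogonalProjectionOnto).continuous.tendsto ((↑z : K))).comp h1
      rw [Function.comp_def] at h2
      have h3 : L.orthogonalProjectionOnto (↑z : K) = z :=
        Submodule.orthogonalProjectionOnto_mem_subspace_eq_self z
      rw [h3] at h2
      simpa only [hπL, compressRep_apply] using h2
    have hrepL : IsHilbertRep A πL := by
      refine ⟨hπLnorm, fun z => ?_⟩
      refine mem_closure_of_tendsto (hLtend z) (Filter.Eventually.of_forall fun i => ?_)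
      exact Submodule.subset_span ⟨e i, z, rfl⟩
    set R : ↥E →L[ℂ] ↥L := P.comp E.subtypeL with hR
    have hRmod : ∀ (a : A) (x : ↥E), R ⟨(π2 a) ↑x, hEinv a ↑x x.2⟩ = πL a (R x) := by
      intro a x
      exact hkey a ↑x x.2
    have hR0 : R ≠ 0 := by
      intro h0
      apply hx0D
      have hz : R ⟨x0, hx0E⟩ = 0 := by rw [h0]; rfl
      have hPx0 : (↑(P x0) : K) = 0 := by
        have h1 : P x0 = 0 := hz
        rw [h1, Submodule.coe_zero]
      have h2 := (hdec x0 hx0E).1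
      rwa [hPx0, sub_zero] at h2
    obtain ⟨V, hV, hRV⟩ := hsub E hEc hEinv ↥L πL hrepL R hRmod hR0
    apply hRV
    refine ContinuousLinearMap.ext fun ζ => ?_
    have hmem : (↑(V ζ) : K) ∈ D :=
      Submodule.le_topologicalClosure _ (Submodule.subset_span ⟨V, hV, ζ, rfl⟩)
    show R (V ζ) = 0
    exact hPD _ hmem
  intro x hx
  exact hTD x (hED hx)

end Core


set_option maxHeartbeats 1000000 in
/-- **Double commutant theorem for completely sub-tracing modules.** If `A` is a complex
Banach algebra with a contractive approximate identity and the Hilbert `A`-module `H` is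
completely sub-tracing (i.e. the countable multiple `H^(ℕ)` is sub-tracing), then the
double commutant of `πH(A)` in `B(H)` equals the closure of `πH(A)` in the weak operator
topology. -/
theorem completely_subtracing_double_commutant [CompleteSpace A] (hA : HasCAI A)
    (H : Type) [NormedAddCommGroup H] [InnerProductSpace ℂ H] [CompleteSpace H]
    (πH : A →ₙₐ[ℂ] (H →L[ℂ] H)) (hrep : IsHilbertRep A πH)
    (hsub : IsSubTracing A (multipleRep A πH ℕ)) :
    Set.centralizer (Set.centralizer (Set.range ⇑πH)) = wotClosure (Set.range ⇑πH) := by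
  classical
  obtain ⟨ι, l, e, hl, he1, hcai⟩ := hA
  haveI := hl
  have hca : ∀ a : A, Filter.Tendsto (fun i => e i * a) l (nhds a) := fun a => (hcai a).1
  apply Set.Subset.antisymm
  · -- hard direction : double commutant ⊆ WOT closure
    intro T hT
    have key : ∀ (s : Finset H) (n : ℕ), ∃ c : A,
        ∀ x ∈ s, ‖T x - πH c x‖ < 1 / (n + 1) := by
      intro s n
      set xs : List H := s.toList with hxs
      set f : ℕ → H := fun i => xs.getD i 0 with hf
      have hfmem : Memℓp f 2 := by
        apply memℓp_gen
        apply summable_of_ne_finset_zero (s := Finset.range xs.length)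
        intro i hi
        have hlen : xs.length ≤ i :=
          Nat.le_of_not_lt (fun h => hi (Finset.mem_range.mpr h))
        have h0 : f i = 0 := List.getD_eq_default _ _ hlen
        rw [h0]
        simp [Real.zero_rpow (by norm_num : (2 : ℝ≥0∞).toReal ≠ 0)]
      set ξ : lp (fun _ : ℕ => H) 2 := ⟨f, hfmem⟩ with hξdef
      -- the closed invariant subspace generated by ξ
      set φ : A →ₗ[ℂ] lp (fun _ : ℕ => H) 2 :=
        { toFun := fun a => multipleRep A πH ℕ a ξ
          map_add' := fun a b => by
            show multipleRep A πH ℕ (a + b) ξ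
              = multipleRep A πH ℕ a ξ + multipleRep A πH ℕ b ξ
            rw [map_add]; rfl
          map_smul' := fun cc a => by
            show multipleRep A πH ℕ (cc • a) ξ = cc • multipleRep A πH ℕ a ξ
            rw [map_smul]; rfl } with hφ
      set E : Submodule ℂ (lp (fun _ : ℕ => H) 2) :=
        (LinearMap.range φ).topologicalClosure with hE
      have hEc : IsClosed (E : Set (lp (fun _ : ℕ => H) 2)) :=
        Submodule.isClosed_topologicalClosure _
      have hrinv : ∀ a : A, ∀ x ∈ LinearMap.range φ,
          multipleRep A πH ℕ a x ∈ LinearMap.range φ := by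
        rintro a x ⟨c, rfl⟩
        refine ⟨a * c, ?_⟩
        show multipleRep A πH ℕ (a * c) ξ = multipleRep A πH ℕ a (multipleRep A πH ℕ c ξ)
        rw [map_mul]; rfl
      have hEinv : ∀ a : A, ∀ x ∈ E, multipleRep A πH ℕ a x ∈ E := by
        intro a x hx
        have hx' : x ∈ closure ((LinearMap.range φ : Submodule ℂ _) : Set _) := hx
        exact map_mem_closure (multipleRep A πH ℕ a).continuous hx'
          (fun z hz => hrinv a z hz)
      have hξE : ξ ∈ E := by
        refine mem_closure_of_tendsto (cai_lp_tendsto he1 hca πH hrep ξ)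
          (Filter.Eventually.of_forall fun i => ?_)
        exact ⟨e i, rfl⟩
      have hTξ : lpDiag ℕ T ξ ∈ E :=
        diag_mapsTo he1 hca πH hrep hsub T hT E hEc hEinv ξ hξE
      have hpos : (0 : ℝ) < 1 / (n + 1) := by positivity
      obtain ⟨y, hy, hdist⟩ := Metric.mem_closure_iff.mp hTξ _ hpos
      obtain ⟨c, rfl⟩ := hy
      refine ⟨c, fun x hx => ?_⟩
      obtain ⟨i, hi, hieq⟩ := List.mem_iff_getElem.mp (Finset.mem_toList.mpr hx)
      have hfi : f i = x := by
        rw [hf]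
        simp only []
        rw [List.getD_eq_getElem xs 0 hi]
        exact hieq
      have hcoord : ‖(lpDiag ℕ T ξ - φ c) i‖ ≤ ‖lpDiag ℕ T ξ - φ c‖ :=
        lp.norm_apply_le_norm (by norm_num) _ i
      have hco : (lpDiag ℕ T ξ - φ c) i = T x - πH c x := by
        have h1 : (lpDiag ℕ T ξ) i = T x := by rw [← hfi]; rfl
        have h2 : (φ c) i = πH c x := by rw [← hfi]; rfl
        calc (lpDiag ℕ T ξ - φ c) i = (lpDiag ℕ T ξ) i - (φ c) i := by
              simp [lp.coeFn_sub]
          _ = T x - πH c x := by rw [h1, h2]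
      calc ‖T x - πH c x‖ = ‖(lpDiag ℕ T ξ - φ c) i‖ := by rw [hco]
        _ ≤ ‖lpDiag ℕ T ξ - φ c‖ := hcoord
        _ = dist (lpDiag ℕ T ξ) (φ c) := (dist_eq_norm _ _).symm
        _ < 1 / (n + 1) := hdist
    choose c hc using key
    haveI : Filter.NeBot (Filter.atTop : Filter (Finset H × ℕ)) := Filter.atTop_neBot
    have htend : Filter.Tendsto
        (fun sn : Finset H × ℕ => ContinuousLinearMapWOT.ofCLM (πH (c sn.1 sn.2)))
        Filter.atTop (nhds (ContinuousLinearMapWOT.ofCLM T)) := by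
      rw [ContinuousLinearMapWOT.tendsto_iff_forall_dual_apply_tendsto]
      intro x y
      have hn : Filter.Tendsto (fun sn : Finset H × ℕ => πH (c sn.1 sn.2) x)
          Filter.atTop (nhds (T x)) := by
        rw [Metric.tendsto_nhds]
        intro ε hε
        obtain ⟨N, hN⟩ := exists_nat_one_div_lt hε
        rw [Filter.eventually_atTop]
        refine ⟨({x}, N), fun sn hsn => ?_⟩
        have hxs : x ∈ sn.1 := hsn.1 (Finset.mem_singleton_self x)
        have hNn : N ≤ sn.2 := hsn.2
        have h1 : ‖T x - πH (c sn.1 sn.2) x‖ < 1 / (sn.2 + 1) := hc sn.1 sn.2 x hxs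
        have h2 : (1 : ℝ) / (sn.2 + 1) ≤ 1 / (N + 1) := by
          apply one_div_le_one_div_of_le (by positivity)
          exact_mod_cast add_le_add_left (Nat.cast_le.mpr hNn) 1
        rw [dist_eq_norm, norm_sub_rev]
        linarith
      have := (y.continuous.tendsto (T x)).comp hn
      simpa [Function.comp_def, ContinuousLinearMap.toWOT_apply] using this
    exact mem_closure_of_tendsto htend (Filter.Eventually.of_forall fun sn =>
      ⟨πH (c sn.1 sn.2), ⟨c sn.1 sn.2, rfl⟩, rfl⟩)
  · -- easy direction : WOT closure ⊆ double commutant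
    intro T hT
    rw [Set.mem_centralizer_iff]
    intro u hu
    have hC : IsClosed {S : (H →WOT[ℂ] H) |
        ∀ (x : H) (ψ : StrongDual ℂ H), ψ (S (u x)) = (ψ.comp u) (S x)} := by
      have hset : {S : (H →WOT[ℂ] H) |
          ∀ (x : H) (ψ : StrongDual ℂ H), ψ (S (u x)) = (ψ.comp u) (S x)} =
          ⋂ (x : H), ⋂ (ψ : StrongDual ℂ H),
            {S | ψ (S (u x)) = (ψ.comp u) (S x)} := by
        ext S; simp [Set.mem_iInter]
      rw [hset]
      exact isClosed_iInter fun x => isClosed_iInter fun ψ =>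
        isClosed_eq (ContinuousLinearMapWOT.continuous_dual_apply (u x) ψ)
          (ContinuousLinearMapWOT.continuous_dual_apply x (ψ.comp u))
    have himg : (ContinuousLinearMapWOT.ofCLM '' Set.range ⇑πH) ⊆
        {S : (H →WOT[ℂ] H) |
          ∀ (x : H) (ψ : StrongDual ℂ H), ψ (S (u x)) = (ψ.comp u) (S x)} := by
      rintro _ ⟨_, ⟨a, rfl⟩, rfl⟩
      intro x ψ
      have hcomm : πH a * u = u * πH a := Set.mem_centralizer_iff.mp hu (πH a) ⟨a, rfl⟩
      have h1 : πH a (u x) = u (πH a x) := by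
        have := congrArg (fun S : H →L[ℂ] H => S x) hcomm
        simpa [ContinuousLinearMap.mul_apply] using this
      simp only [ContinuousLinearMap.toWOT_apply, ContinuousLinearMap.coe_comp',
        Function.comp_apply]
      rw [h1]
    have hTC := (IsClosed.closure_subset_iff hC).mpr himg hT
    ext x
    show u (T x) = T (u x)
    have hptw : ∀ ψ : StrongDual ℂ H, ψ (T (u x)) = ψ (u (T x)) := by
      intro ψ
      have := hTC x ψ
      simpa [ContinuousLinearMap.toWOT_apply] using this
    exact ((SeparatingDual.eq_iff_forall_dual_eq (R := ℂ)).mpr hptw).symm
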